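/- There exist two-qubit states ρ_AB and ρ_BC such that, denoting by t^A₁ ≥ t^A₂ the two largest eigenvalues of T_{ρ_AB}ᵀ T_{ρ_AB} and by t^C₁ ≥ t^C₂ the two largest eigenvalues of T_{ρ_BC}ᵀ T_{ρ_BC}, one has √(t^A₁ + t^A₂) > 1 and √(t^C₁ + t^C₂) > 1 but √(√(t^A₁ t^C₁) + √(t^A₂ t^C₂)) ≤ 1. In particular this holds for ρ_AB = (3/5)|ψ⁺⟩⟨ψ⁺| + (2/5)|φ⁺⟩⟨φ⁺| and ρ_BC = (7/10)|ψ⁻⟩⟨ψ⁻| + (3/10)·[(1/3)·(|ψ⁻⟩⟨ψ⁻| + |ψ⁺⟩⟨ψ⁺|)/2 + (2/3)·I/4], for which t^A₁ = 1, t^A₂ = 1/25, t^C₁ = 16/25 and t^C₂ = 49/100. -/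

import Mathlib

open Matrix Kronecker Complex ComplexOrder

/-- The Pauli matrices σ₁ = σ_x, σ₂ = σ_y, σ₃ = σ_z. -/
noncomputable def pauli : Fin 3 → Matrix (Fin 2) (Fin 2) ℂ :=
  ![!![0, 1; 1, 0], !![0, -Complex.I; Complex.I, 0], !![1, 0; 0, -1]]

/-- For v ∈ ℝ³, the matrix v·σ = v₁σ_x + v₂σ_y + v₃σ_z. -/
noncomputable def pauliVec (v : Fin 3 → ℝ) : Matrix (Fin 2) (Fin 2) ℂ :=
  (v 0 : ℂ) • pauli 0 + (v 1 : ℂ) • pauli 1 + (v 2 : ℂ) • pauli 2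

/-- A two-qubit state: a 4×4 complex positive semidefinite matrix of trace 1. -/
def TwoQubitState (ρ : Matrix (Fin 2 × Fin 2) (Fin 2 × Fin 2) ℂ) : Prop :=
  ρ.PosSemidef ∧ ρ.trace = 1

/-- The correlation matrix of a two-qubit state: (T_ρ)_{nm} = Tr[(σ_n ⊗ σ_m) ρ]. -/
noncomputable def corr (ρ : Matrix (Fin 2 × Fin 2) (Fin 2 × Fin 2) ℂ) :
    Matrix (Fin 3) (Fin 3) ℝ :=
  Matrix.of fun n m => ((pauli n ⊗ₖ pauli m) * ρ).trace.re

/-- The two largest eigenvalues (with multiplicity, in decreasing order) of a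
    symmetric real 3×3 matrix, as the pair (largest, second largest). -/
noncomputable def topEigs (M : Matrix (Fin 3) (Fin 3) ℝ) : ℝ × ℝ :=
  if h : M.IsHermitian then
    ((h.eigenvalues ∘ Tuple.sort h.eigenvalues) 2,
     (h.eigenvalues ∘ Tuple.sort h.eigenvalues) 1)
  else 0

/-- Computational basis vectors of ℂ² ⊗ ℂ² ≅ ℂ⁴. -/
def ket (i j : Fin 2) : (Fin 2 × Fin 2) → ℂ := fun p => if p = (i, j) then 1 else 0

/-- Bell states. -/
noncomputable def phiPlus : (Fin 2 × Fin 2) → ℂ := ((Real.sqrt 2 : ℂ))⁻¹ • (ket 0 0 + ket 1 1)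
noncomputable def psiPlus : (Fin 2 × Fin 2) → ℂ := ((Real.sqrt 2 : ℂ))⁻¹ • (ket 0 1 + ket 1 0)
noncomputable def psiMinus : (Fin 2 × Fin 2) → ℂ := ((Real.sqrt 2 : ℂ))⁻¹ • (ket 0 1 - ket 1 0)

/-- The rank-one projection |v⟩⟨v|. -/
noncomputable def proj (v : (Fin 2 × Fin 2) → ℂ) :
    Matrix (Fin 2 × Fin 2) (Fin 2 × Fin 2) ℂ :=
  Matrix.vecMulVec v (star v)

/-- The specific state ρ_AB = (3/5)|ψ⁺⟩⟨ψ⁺| + (2/5)|φ⁺⟩⟨φ⁺|. -/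
noncomputable def ρABex : Matrix (Fin 2 × Fin 2) (Fin 2 × Fin 2) ℂ :=
  (3/5 : ℂ) • proj psiPlus + (2/5 : ℂ) • proj phiPlus

/-- The specific state
    ρ_BC = (7/10)|ψ⁻⟩⟨ψ⁻| + (3/10)·[(1/3)·(|ψ⁻⟩⟨ψ⁻| + |ψ⁺⟩⟨ψ⁺|)/2 + (2/3)·I/4]. -/
noncomputable def ρBCex : Matrix (Fin 2 × Fin 2) (Fin 2 × Fin 2) ℂ :=
  (7/10 : ℂ) • proj psiMinus +
    (3/10 : ℂ) • ((1/3 : ℂ) • ((1/2 : ℂ) • (proj psiMinus + proj psiPlus))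
      + (2/3 : ℂ) • ((1/4 : ℂ) • (1 : Matrix (Fin 2 × Fin 2) (Fin 2 × Fin 2) ℂ)))

noncomputable def eIdx : Fin 2 × Fin 2 → Fin 4 := fun p => ⟨2 * p.1.val + p.2.val, by omega⟩

noncomputable def M1 : Matrix (Fin 2 × Fin 2) (Fin 2 × Fin 2) ℂ := fun p q =>
  !![1/5,0,0,1/5; 0,3/10,3/10,0; 0,3/10,3/10,0; 1/5,0,0,1/5] (eIdx p) (eIdx q)

noncomputable def M2 : Matrix (Fin 2 × Fin 2) (Fin 2 × Fin 2) ℂ := fun p q =>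
  !![1/20,0,0,0; 0,9/20,-7/20,0; 0,-7/20,9/20,0; 0,0,0,1/20] (eIdx p) (eIdx q)

lemma hsq2 : ((Real.sqrt 2 : ℂ))⁻¹ * ((Real.sqrt 2 : ℂ))⁻¹ = 1/2 := by
  rw [← mul_inv]; norm_cast
  rw [Real.mul_self_sqrt (by norm_num)]; norm_num

theorem hrAB : ρABex = M1 := by
  ext ⟨i,j⟩ ⟨k,l⟩
  fin_cases i <;> fin_cases j <;> fin_cases k <;> fin_cases l <;>
    simp [ρABex, M1, eIdx, proj, psiPlus, phiPlus, ket, Matrix.vecMulVec_apply,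
      Prod.ext_iff, Fin.ext_iff] <;> norm_num [hsq2]

theorem hrBC : ρBCex = M2 := by
  ext ⟨i,j⟩ ⟨k,l⟩
  fin_cases i <;> fin_cases j <;> fin_cases k <;> fin_cases l <;>
    simp [ρBCex, M2, eIdx, proj, psiMinus, psiPlus, ket, Matrix.vecMulVec_apply,
      Matrix.one_apply, Prod.ext_iff, Fin.ext_iff] <;> norm_num [hsq2, Matrix.vecHead, Matrix.vecTail]

theorem hcAB : corr ρABex = Matrix.of ![![1,0,0],![0,1/5,0],![0,0,-1/5]] := by
  rw [hrAB]
  ext n m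
  fin_cases n <;> fin_cases m <;>
    simp [corr, M1, eIdx, pauli, Matrix.trace, Matrix.mul_apply, Fintype.sum_prod_type,
      Fin.sum_univ_succ, Matrix.diag] <;> norm_num [Matrix.vecHead, Matrix.vecTail]

theorem hcBC : corr ρBCex = Matrix.of ![![-7/10,0,0],![0,-7/10,0],![0,0,-4/5]] := by
  rw [hrBC]
  ext n m
  fin_cases n <;> fin_cases m <;>
    simp [corr, M2, eIdx, pauli, Matrix.trace, Matrix.mul_apply, Fintype.sum_prod_type,
      Fin.sum_univ_succ, Matrix.diag] <;> norm_num [Matrix.vecHead, Matrix.vecTail]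

lemma sum_eigs_eq_trace {A : Matrix (Fin 3) (Fin 3) ℝ} (hA : A.IsHermitian) :
    ∑ i, hA.eigenvalues i = A.trace := by
  have h := congrArg Matrix.trace hA.spectral_theorem
  rw [Unitary.conjStarAlgAut_apply, Matrix.trace_mul_cycle,
    (Matrix.mem_unitaryGroup_iff').mp (Matrix.IsHermitian.eigenvectorUnitary hA).2, one_mul,
    Matrix.trace_diagonal] at h
  simpa using h.symm

lemma topEigs_diag (d : Fin 3 → ℝ) (a b : ℝ) (hba : b < a)
    (hrange : ∀ i, d i = a ∨ d i = b) (hsum : d 0 + d 1 + d 2 = a + b + b) :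
    topEigs (Matrix.diagonal d) = (a, b) := by
  have hH : (Matrix.diagonal d).IsHermitian := Matrix.isHermitian_diagonal _
  rw [topEigs, dif_pos hH]
  set e := hH.eigenvalues with he
  have hspec : ∀ i, e i = a ∨ e i = b := by
    intro i
    have h1 : e i ∈ spectrum ℝ (Matrix.diagonal d) := hH.eigenvalues_mem_spectrum_real i
    rw [spectrum_diagonal] at h1
    obtain ⟨j, hj⟩ := h1
    rw [← hj]; exact hrange j
  have hsum' : e 0 + e 1 + e 2 = a + b + b := by
    have := sum_eigs_eq_trace hH
    rw [Matrix.trace_diagonal, Fin.sum_univ_three, Fin.sum_univ_three] at this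
    linarith [this, hsum]
  set g := e ∘ Tuple.sort e with hg
  have hmono : Monotone g := Tuple.monotone_sort e
  have hgsum : g 0 + g 1 + g 2 = a + b + b := by
    have : ∑ i, g i = ∑ i, e i := Equiv.sum_comp (Tuple.sort e) e
    rw [Fin.sum_univ_three, Fin.sum_univ_three] at this
    linarith [this, hsum']
  have hg0 := hspec (Tuple.sort e 0)
  have hg1 := hspec (Tuple.sort e 1)
  have hg2 := hspec (Tuple.sort e 2)
  have h01 : g 0 ≤ g 1 := hmono (by decide : (0:Fin 3) ≤ 1)
  have h12 : g 1 ≤ g 2 := hmono (by decide : (1:Fin 3) ≤ 2)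
  have : g 2 = a ∧ g 1 = b := by
    rcases hg0 with h0 | h0 <;> rcases hg1 with h1 | h1 <;> rcases hg2 with h2 | h2 <;>
      simp only [hg, Function.comp_apply] at * <;>
      constructor <;> linarith
  rw [this.1, this.2]

lemma psd_smul {M : Matrix (Fin 2 × Fin 2) (Fin 2 × Fin 2) ℂ} (hM : M.PosSemidef)
    {c : ℂ} (hc : 0 ≤ c) : (c • M).PosSemidef := by
  have him : c.im = 0 := by
    have := (Complex.le_def.mp hc).2; simpa using this.symm
  rw [Matrix.posSemidef_iff_dotProduct_mulVec]
  constructor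
  · rw [Matrix.IsHermitian, Matrix.conjTranspose_smul, hM.1.eq]
    congr 1
    rw [Complex.ext_iff]; simp [him]
  · intro x
    rw [Matrix.smul_mulVec, dotProduct_smul, smul_eq_mul]
    exact mul_nonneg hc ((Matrix.posSemidef_iff_dotProduct_mulVec.mp hM).2 x)

lemma psd_proj (v : (Fin 2 × Fin 2) → ℂ) : (proj v).PosSemidef := by
  rw [proj, Matrix.vecMulVec_eq Unit, show Matrix.replicateRow Unit (star v) = (Matrix.replicateCol Unit v)ᴴ by
    rw [Matrix.conjTranspose_replicateCol]]
  exact Matrix.posSemidef_self_mul_conjTranspose _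

lemma cnn (x : ℚ) (h : 0 ≤ x) : (0:ℂ) ≤ (x:ℂ) := by
  rw [Complex.le_def]
  constructor
  · simp; exact_mod_cast h
  · simp

lemma stateAB : TwoQubitState ρABex := by
  constructor
  · exact (psd_smul (psd_proj psiPlus) (by norm_num [Complex.le_def])).add
      (psd_smul (psd_proj phiPlus) (by norm_num [Complex.le_def]))
  · rw [hrAB]
    simp [Matrix.trace, M1, eIdx, Fintype.sum_prod_type, Fin.sum_univ_succ, Matrix.diag]
    norm_num

lemma stateBC : TwoQubitState ρBCex := by
  constructor
  · refine (psd_smul (psd_proj psiMinus) (by norm_num [Complex.le_def])).add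
      (psd_smul (Matrix.PosSemidef.add
        (psd_smul (psd_smul ((psd_proj psiMinus).add (psd_proj psiPlus))
          (by norm_num [Complex.le_def])) (by norm_num [Complex.le_def]))
        (psd_smul (psd_smul Matrix.PosSemidef.one (by norm_num [Complex.le_def]))
          (by norm_num [Complex.le_def]))) (by norm_num [Complex.le_def]))
  · rw [hrBC]
    simp [Matrix.trace, M2, eIdx, Fintype.sum_prod_type, Fin.sum_univ_succ, Matrix.diag]
    norm_num

lemma hTAB : (corr ρABex)ᵀ * corr ρABex = Matrix.diagonal ![1, 1/25, 1/25] := by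
  rw [hcAB]
  ext n m
  fin_cases n <;> fin_cases m <;>
    simp [Matrix.mul_apply, Fin.sum_univ_three, Matrix.diagonal, Matrix.transpose_apply] <;> norm_num [Matrix.vecHead, Matrix.vecTail]

lemma hTBC : (corr ρBCex)ᵀ * corr ρBCex = Matrix.diagonal ![49/100, 49/100, 16/25] := by
  rw [hcBC]
  ext n m
  fin_cases n <;> fin_cases m <;>
    simp [Matrix.mul_apply, Fin.sum_univ_three, Matrix.diagonal, Matrix.transpose_apply] <;> norm_num [Matrix.vecHead, Matrix.vecTail]

lemma topAB : topEigs ((corr ρABex)ᵀ * corr ρABex) = (1, 1/25) := by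
  rw [hTAB]
  exact topEigs_diag _ 1 (1/25) (by norm_num)
    (by intro i; fin_cases i <;> norm_num) (by norm_num [Matrix.cons_val_two, Matrix.vecHead, Matrix.vecTail])

lemma topBC : topEigs ((corr ρBCex)ᵀ * corr ρBCex) = (16/25, 49/100) := by
  rw [hTBC]
  exact topEigs_diag _ (16/25) (49/100) (by norm_num)
    (by intro i; fin_cases i <;> norm_num) (by norm_num [Matrix.cons_val_two, Matrix.vecHead, Matrix.vecTail])

lemma ineq1 : 1 < Real.sqrt (1 + 1/25) := by
  rw [show (1:ℝ) + 1/25 = 26/25 by norm_num]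
  rw [← Real.sqrt_one]
  exact Real.sqrt_lt_sqrt (by norm_num) (by norm_num)

lemma ineq2 : 1 < Real.sqrt (16/25 + 49/100) := by
  rw [← Real.sqrt_one]
  exact Real.sqrt_lt_sqrt (by norm_num) (by norm_num)

lemma ineq3 : Real.sqrt (Real.sqrt ((1 : ℝ) * (16/25)) + Real.sqrt ((1/25) * (49/100))) ≤ 1 := by
  have ha : Real.sqrt ((1:ℝ) * (16/25)) = 4/5 := by
    rw [show (1:ℝ) * (16/25) = (4/5)^2 by norm_num, Real.sqrt_sq (by norm_num)]
  have hb : Real.sqrt ((1/25:ℝ) * (49/100)) = 7/50 := by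
    rw [show (1/25:ℝ) * (49/100) = (7/50)^2 by norm_num, Real.sqrt_sq (by norm_num)]
  rw [ha, hb]
  exact Real.sqrt_le_one.mpr (by norm_num)

/-- There exist two-qubit states which are both CHSH non-local
    (S_AB > 1 and S_BC > 1) yet cannot violate the bilocality inequality
    (B_max ≤ 1); in particular this holds for the states ρABex and ρBCex,
    for which t^A₁ = 1, t^A₂ = 1/25, t^C₁ = 16/25 and t^C₂ = 49/100. -/
theorem exists_chsh_nonlocal_states_with_bilocal_bound :
    (∃ ρAB ρBC : Matrix (Fin 2 × Fin 2) (Fin 2 × Fin 2) ℂ,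
      TwoQubitState ρAB ∧ TwoQubitState ρBC ∧
      ∃ tA1 tA2 tC1 tC2 : ℝ,
        topEigs ((corr ρAB)ᵀ * corr ρAB) = (tA1, tA2) ∧
        topEigs ((corr ρBC)ᵀ * corr ρBC) = (tC1, tC2) ∧
        1 < Real.sqrt (tA1 + tA2) ∧ 1 < Real.sqrt (tC1 + tC2) ∧
        Real.sqrt (Real.sqrt (tA1 * tC1) + Real.sqrt (tA2 * tC2)) ≤ 1) ∧
    (TwoQubitState ρABex ∧ TwoQubitState ρBCex ∧
      topEigs ((corr ρABex)ᵀ * corr ρABex) = (1, 1/25) ∧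
      topEigs ((corr ρBCex)ᵀ * corr ρBCex) = (16/25, 49/100) ∧
      1 < Real.sqrt (1 + 1/25) ∧ 1 < Real.sqrt (16/25 + 49/100) ∧
      Real.sqrt (Real.sqrt ((1 : ℝ) * (16/25)) + Real.sqrt ((1/25) * (49/100))) ≤ 1) := by
  refine ⟨⟨ρABex, ρBCex, stateAB, stateBC, 1, 1/25, 16/25, 49/100,
      topAB, topBC, ineq1, ineq2, ineq3⟩,
    stateAB, stateBC, topAB, topBC, ineq1, ineq2, ineq3⟩
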